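/- arXiv:2009.00971 — 3 statements merged into one kernel-verified Lean document; each statement's English description precedes it below -/
import Mathlib

section
/- Every system of d linear equations with integer coefficients of binary length at most s that has a solution over the non-negative integers has such a solution with at most O(s·d·log d) non-zero components (Integer Carathéodory theorem of Eisenbrand–Shmonin); in particular, for a system of d equations with all coefficients equal to 0 or 1, there is a solution whose support has size polynomially bounded in d. -/
open Finset


lemma carath_arith (d s : ℕ) :
    (2 * (16*(s+1)*d*(Nat.log 2 d + 1) + 1) * 2^s + 1)^d
      < 2^(16*(s+1)*d*(Nat.log 2 d + 1) + 1) := by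
  rcases Nat.eq_zero_or_pos d with hd | hd
  · subst hd; simp
  set L := Nat.log 2 d with hL
  set K := 16*(s+1)*d*(L+1) with hK
  have h1 : s + 1 ≤ 2^s := Nat.lt_two_pow_self (n := s)
  have hd2 : d ≤ 2^(L+1) := (Nat.lt_pow_succ_log_self (by norm_num) d).le
  have hL1 : L + 1 ≤ 2^L := Nat.lt_two_pow_self (n := L)
  have hM : K + 1 ≤ 2^(s + 2*L + 6) := by
    have h2 : K ≤ 2^4 * 2^s * 2^(L+1) * 2^L :=
      Nat.mul_le_mul (Nat.mul_le_mul (Nat.mul_le_mul le_rfl h1) hd2) hL1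
    have h3 : 2^4 * 2^s * 2^(L+1) * 2^L = 2^(s + 2*L + 5) := by ring
    have h4 : (0:ℕ) < 2^(s + 2*L + 5) := Nat.pow_pos (by norm_num)
    have h5 : 2^(s + 2*L + 5) + 2^(s + 2*L + 5) = 2^(s + 2*L + 6) := by ring
    omega
  have hB : 2 * (K + 1) * 2^s + 1 ≤ 2^(2*s + 2*L + 8) := by
    have h0 : 0 < 2 * (K+1) * 2^s := by positivity
    have h6 : 2^2 * (K+1) * 2^s = 2 * (2 * (K+1) * 2^s) := by ring
    have h7 : 2^2 * (K+1) * 2^s ≤ 2^2 * 2^(s + 2*L + 6) * 2^s :=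
      Nat.mul_le_mul (Nat.mul_le_mul le_rfl hM) le_rfl
    have h8 : 2^2 * 2^(s + 2*L + 6) * 2^s = 2^(2*s + 2*L + 8) := by ring
    omega
  have hexp : (2*s + 2*L + 8) * d ≤ K := by
    rw [hK]
    have : 2*s + 2*L + 8 ≤ 16*(s+1)*(L+1) := by nlinarith
    calc (2*s + 2*L + 8) * d ≤ 16*(s+1)*(L+1)*d := Nat.mul_le_mul this le_rfl
      _ = 16*(s+1)*d*(L+1) := by ring
  calc (2 * (K + 1) * 2^s + 1)^d ≤ (2^(2*s + 2*L + 8))^d := Nat.pow_le_pow_left hB d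
    _ = 2^((2*s + 2*L + 8) * d) := by rw [← pow_mul]
    _ ≤ 2^K := Nat.pow_le_pow_right (by norm_num) hexp
    _ < 2^(K+1) := Nat.pow_lt_pow_right (by norm_num) (by omega)

lemma carath_step {d n : ℕ} (A : Fin d → Fin n → ℤ) (b : Fin d → ℤ)
    (x : Fin n → ℕ) (hx : ∀ i, ∑ j, A i j * (x j : ℤ) = b i)
    (P Q : Finset (Fin n)) (hPQ : Disjoint P Q)
    (hP : ∀ j ∈ P, x j ≠ 0) (hQ : ∀ j ∈ Q, x j ≠ 0)
    (hne : P.Nonempty)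
    (hsum : ∀ i, ∑ j ∈ P, A i j = ∑ j ∈ Q, A i j) :
    ∃ y : Fin n → ℕ, (∀ i, ∑ j, A i j * (y j : ℤ) = b i) ∧
      (univ.filter fun j => y j ≠ 0).card < (univ.filter fun j => x j ≠ 0).card := by
  obtain ⟨j₀, hj₀P, hj₀min⟩ := Finset.exists_min_image P x hne
  set m := x j₀ with hm
  set y : Fin n → ℕ := fun j => if j ∈ P then x j - m else if j ∈ Q then x j + m else x j with hy
  refine ⟨y, ?_, ?_⟩
  · intro i
    have key : ∀ j, A i j * (y j : ℤ) = A i j * (x j : ℤ) +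
        ((if j ∈ P then -((m:ℤ) * A i j) else 0) + (if j ∈ Q then (m:ℤ) * A i j else 0)) := by
      intro j
      by_cases hjP : j ∈ P
      · have hjQ : j ∉ Q := Finset.disjoint_left.mp hPQ hjP
        have hle : m ≤ x j := hj₀min j hjP
        simp only [hy, hjP, hjQ, if_true, if_false]
        push_cast [Nat.cast_sub hle]
        ring
      · by_cases hjQ : j ∈ Q
        · simp only [hy, hjP, hjQ, if_true, if_false]
          push_cast
          ring
        · simp only [hy, hjP, hjQ, if_false]
          ring
    calc ∑ j, A i j * (y j : ℤ)
        = ∑ j, (A i j * (x j : ℤ) +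
            ((if j ∈ P then -((m:ℤ) * A i j) else 0) + (if j ∈ Q then (m:ℤ) * A i j else 0))) := by
          exact Finset.sum_congr rfl fun j _ => key j
      _ = (∑ j, A i j * (x j : ℤ)) +
            ((∑ j ∈ P, -((m:ℤ) * A i j)) + (∑ j ∈ Q, (m:ℤ) * A i j)) := by
          rw [Finset.sum_add_distrib, Finset.sum_add_distrib, Finset.sum_ite_mem,
            Finset.sum_ite_mem, Finset.univ_inter, Finset.univ_inter]
      _ = b i := by
          rw [hx i, Finset.sum_neg_distrib]
          rw [← Finset.mul_sum, ← Finset.mul_sum, hsum i]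
          ring
  · have hy0 : y j₀ = 0 := by simp [hy, hj₀P, hm]
    have hsub : (univ.filter fun j => y j ≠ 0) ⊆ (univ.filter fun j => x j ≠ 0).erase j₀ := by
      intro j hj
      simp only [mem_filter, mem_univ, true_and] at hj
      rw [Finset.mem_erase]
      constructor
      · rintro rfl; exact hj hy0
      · simp only [mem_filter, mem_univ, true_and]
        by_cases hjP : j ∈ P
        · exact hP j hjP
        · by_cases hjQ : j ∈ Q
          · exact hQ j hjQ
          · simpa [hy, hjP, hjQ] using hj
    have hj₀mem : j₀ ∈ univ.filter fun j => x j ≠ 0 := by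
      simp only [mem_filter, mem_univ, true_and]; exact hP j₀ hj₀P
    calc (univ.filter fun j => y j ≠ 0).card
        ≤ ((univ.filter fun j => x j ≠ 0).erase j₀).card := Finset.card_le_card hsub
      _ < (univ.filter fun j => x j ≠ 0).card := Finset.card_erase_lt_of_mem hj₀mem
lemma carath_reduce {d n s : ℕ} (A : Fin d → Fin n → ℤ) (b : Fin d → ℤ)
    (hA : ∀ i j, (A i j).natAbs ≤ 2 ^ s)
    (x : Fin n → ℕ) (hx : ∀ i, ∑ j, A i j * (x j : ℤ) = b i)
    (hbig : 16*(s+1)*d*(Nat.log 2 d + 1) + 1 ≤ (univ.filter fun j => x j ≠ 0).card) :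
    ∃ y : Fin n → ℕ, (∀ i, ∑ j, A i j * (y j : ℤ) = b i) ∧
      (univ.filter fun j => y j ≠ 0).card < (univ.filter fun j => x j ≠ 0).card := by
  set M := 16*(s+1)*d*(Nat.log 2 d + 1) + 1 with hM
  obtain ⟨T, hTsub, hTcard⟩ := Finset.exists_subset_card_eq hbig
  set f : Finset (Fin n) → (Fin d → ℤ) := fun U i => ∑ j ∈ U, A i j with hf
  set cod := Fintype.piFinset fun _ : Fin d => Finset.Icc (-(M * 2^s : ℤ)) (M * 2^s) with hcod
  have hmaps : ∀ U ∈ T.powerset, f U ∈ cod := by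
    intro U hU
    rw [Finset.mem_powerset] at hU
    rw [hcod, Fintype.mem_piFinset]
    intro i
    rw [Finset.mem_Icc]
    have habs : |∑ j ∈ U, A i j| ≤ (M * 2^s : ℤ) := by
      calc |∑ j ∈ U, A i j| ≤ ∑ j ∈ U, |A i j| := Finset.abs_sum_le_sum_abs _ _
        _ ≤ ∑ j ∈ U, (2^s : ℤ) := by
            apply Finset.sum_le_sum
            intro j _
            rw [Int.abs_eq_natAbs]
            exact_mod_cast hA i j
        _ = U.card * 2^s := by rw [Finset.sum_const, nsmul_eq_mul]
        _ ≤ M * 2^s := by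
            have : U.card ≤ M := by
              calc U.card ≤ T.card := Finset.card_le_card hU
                _ = M := hTcard
            have : (U.card : ℤ) ≤ (M : ℤ) := by exact_mod_cast this
            have h2 : (0:ℤ) ≤ 2^s := by positivity
            push_cast
            exact mul_le_mul_of_nonneg_right this h2
    constructor
    · linarith [neg_abs_le (∑ j ∈ U, A i j)]
    · linarith [le_abs_self (∑ j ∈ U, A i j)]
  have hcard : cod.card < (T.powerset).card := by
    rw [Finset.card_powerset, hTcard, hcod, Fintype.card_piFinset]
    have hIcc : (Finset.Icc (-(M * 2^s : ℤ)) (M * 2^s)).card = 2 * M * 2^s + 1 := by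
      rw [Int.card_Icc]
      have : ((M : ℤ) * 2^s + 1 - -((M:ℤ) * 2^s)) = ((2 * M * 2^s + 1 : ℕ) : ℤ) := by
        push_cast; ring
      rw [this, Int.toNat_natCast]
    simp only [hIcc, Finset.prod_const, Finset.card_univ, Fintype.card_fin]
    exact carath_arith d s
  obtain ⟨U₁, hU₁, U₂, hU₂, hneq, heq⟩ :=
    Finset.exists_ne_map_eq_of_card_lt_of_maps_to hcard hmaps
  rw [Finset.mem_powerset] at hU₁ hU₂
  have hTx : ∀ j ∈ T, x j ≠ 0 := by
    intro j hj
    have := hTsub hj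
    simpa using this
  have hsums : ∀ i, ∑ j ∈ U₁ \ U₂, A i j = ∑ j ∈ U₂ \ U₁, A i j := by
    intro i
    have h1 : ∑ j ∈ U₁ ∩ U₂, A i j + ∑ j ∈ U₁ \ U₂, A i j = ∑ j ∈ U₁, A i j :=
      Finset.sum_inter_add_sum_sdiff U₁ U₂ (A i)
    have h2 : ∑ j ∈ U₂ ∩ U₁, A i j + ∑ j ∈ U₂ \ U₁, A i j = ∑ j ∈ U₂, A i j :=
      Finset.sum_inter_add_sum_sdiff U₂ U₁ (A i)
    have h3 : ∑ j ∈ U₁, A i j = ∑ j ∈ U₂, A i j := congrFun heq i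
    rw [Finset.inter_comm] at h2
    linarith
  have hdisj : Disjoint (U₁ \ U₂) (U₂ \ U₁) := disjoint_sdiff_sdiff
  rcases Finset.eq_empty_or_nonempty (U₁ \ U₂) with hPe | hPne
  · have hQne : (U₂ \ U₁).Nonempty := by
      rw [Finset.sdiff_eq_empty_iff_subset] at hPe
      rw [Finset.sdiff_nonempty]
      intro hc
      exact hneq (Finset.Subset.antisymm hPe hc)
    exact carath_step A b x hx (U₂ \ U₁) (U₁ \ U₂) hdisj.symm
      (fun j hj => hTx j (hU₂ (Finset.sdiff_subset hj)))
      (fun j hj => hTx j (hU₁ (Finset.sdiff_subset hj)))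
      hQne (fun i => (hsums i).symm)
  · exact carath_step A b x hx (U₁ \ U₂) (U₂ \ U₁) hdisj
      (fun j hj => hTx j (hU₁ (Finset.sdiff_subset hj)))
      (fun j hj => hTx j (hU₂ (Finset.sdiff_subset hj)))
      hPne hsums

lemma carath_main {d n s : ℕ} (A : Fin d → Fin n → ℤ) (b : Fin d → ℤ)
    (hA : ∀ i j, (A i j).natAbs ≤ 2 ^ s) :
    ∀ N (x : Fin n → ℕ), (univ.filter fun j => x j ≠ 0).card ≤ N →
      (∀ i, ∑ j, A i j * (x j : ℤ) = b i) →
      ∃ y : Fin n → ℕ, (∀ i, ∑ j, A i j * (y j : ℤ) = b i) ∧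
        (univ.filter fun j => y j ≠ 0).card ≤ 16*(s+1)*d*(Nat.log 2 d + 1) := by
  intro N
  induction N with
  | zero => intro x hc hx; exact ⟨x, hx, by omega⟩
  | succ N ih =>
      intro x hc hx
      by_cases hle : (univ.filter fun j => x j ≠ 0).card ≤ 16*(s+1)*d*(Nat.log 2 d + 1)
      · exact ⟨x, hx, hle⟩
      · obtain ⟨y, hy, hylt⟩ := carath_reduce A b hA x hx (by omega)
        exact ih y (by omega) hy

theorem integer_caratheodory :
    (∃ C : ℕ, ∀ (d n s : ℕ) (A : Fin d → Fin n → ℤ) (b : Fin d → ℤ),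
      (∀ i j, (A i j).natAbs ≤ 2 ^ s) →
      (∃ x : Fin n → ℕ, ∀ i, ∑ j, A i j * (x j : ℤ) = b i) →
      ∃ x : Fin n → ℕ, (∀ i, ∑ j, A i j * (x j : ℤ) = b i) ∧
        (Finset.univ.filter fun j => x j ≠ 0).card ≤
          C * (s + 1) * d * (Nat.log 2 d + 1)) ∧
    (∃ C : ℕ, ∀ (d n : ℕ) (A : Fin d → Fin n → ℤ) (b : Fin d → ℤ),
      (∀ i j, A i j = 0 ∨ A i j = 1) →
      (∃ x : Fin n → ℕ, ∀ i, ∑ j, A i j * (x j : ℤ) = b i) →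
      ∃ x : Fin n → ℕ, (∀ i, ∑ j, A i j * (x j : ℤ) = b i) ∧
        (Finset.univ.filter fun j => x j ≠ 0).card ≤
          C * d * (Nat.log 2 d + 1)) := by
  have main : ∀ (d n s : ℕ) (A : Fin d → Fin n → ℤ) (b : Fin d → ℤ),
      (∀ i j, (A i j).natAbs ≤ 2 ^ s) →
      (∃ x : Fin n → ℕ, ∀ i, ∑ j, A i j * (x j : ℤ) = b i) →
      ∃ x : Fin n → ℕ, (∀ i, ∑ j, A i j * (x j : ℤ) = b i) ∧
        (Finset.univ.filter fun j => x j ≠ 0).card ≤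
          16 * (s + 1) * d * (Nat.log 2 d + 1) := by
    intro d n s A b hA ⟨x, hx⟩
    exact carath_main A b hA _ x le_rfl hx
  constructor
  · exact ⟨16, main⟩
  · refine ⟨16, fun d n A b hA hex => ?_⟩
    have hA' : ∀ i j, (A i j).natAbs ≤ 2 ^ 0 := by
      intro i j
      rcases hA i j with h | h <;> simp [h]
    obtain ⟨x, hx, hcard⟩ := main d n 0 A b hA' hex
    exact ⟨x, hx, by simpa using hcard⟩
end

section
/- In the one-step logic of a coalgebraic modal logic, a one-step pair (φ, η) over V is satisfiable iff it is satisfiable by a one-step model whose carrier is the set of valuations V → 2 satisfying η, with the canonical valuation τ(a) = {κ | κ(a) = ⊤}. -/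
structure SetFunctor where
  Obj : Type → Type
  map : {X Y : Type} → (X → Y) → Obj X → Obj Y
  map_id : ∀ (X : Type) (t : Obj X), map (id : X → X) t = t
  map_comp : ∀ {X Y Z : Type} (f : X → Y) (g : Y → Z) (t : Obj X),
    map (g ∘ f) t = map g (map f t)

/-- A one-step model `(X, τ, t)` satisfies the one-step pair given by the
modal conjunctive clause `lits` (a list of signed modal literals `±♥a`)
and the propositional formula `η` (given by its set of satisfying
valuations). -/
def OneStepSat (T : SetFunctor) {Λ V : Type}
    (lift : Λ → (X : Type) → Set X → Set (T.Obj X))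
    (lits : List (Bool × Λ × V)) (η : (V → Prop) → Prop)
    (X : Type) (τ : V → Set X) (t : T.Obj X) : Prop :=
  (∀ x : X, η fun a => x ∈ τ a) ∧
  ∀ l ∈ lits, (l.1 = true ↔ t ∈ lift l.2.1 X (τ l.2.2))

theorem one_step_canonical_model (T : SetFunctor) {Λ V : Type}
    (lift : Λ → (X : Type) → Set X → Set (T.Obj X))
    (natural : ∀ (h : Λ) {X Y : Type} (f : X → Y) (B : Set Y),
      lift h X (f ⁻¹' B) = T.map f ⁻¹' lift h Y B)
    (lits : List (Bool × Λ × V)) (η : (V → Prop) → Prop) :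
    (∃ (X : Type) (τ : V → Set X) (t : T.Obj X),
        OneStepSat T lift lits η X τ t) ↔
    (∃ t : T.Obj {κ : V → Prop // η κ},
        OneStepSat T lift lits η {κ : V → Prop // η κ}
          (fun a => {κ | κ.1 a}) t) := by
  constructor
  · rintro ⟨Y, θ, s, h1, h2⟩
    let f : Y → {κ : V → Prop // η κ} := fun y => ⟨fun a => y ∈ θ a, h1 y⟩
    refine ⟨T.map f s, fun κ => κ.2, fun l hl => ?_⟩
    have : θ l.2.2 = f ⁻¹' {κ : {κ : V → Prop // η κ} | κ.1 l.2.2} := rfl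
    rw [h2 l hl, this, natural]
    rfl
  · rintro ⟨t, h⟩
    exact ⟨_, _, t, h⟩
end

section
/- The Presburger one-step pair (♯a + ♯b − ♯c > 0, η) is one-step satisfiable iff η is propositionally consistent with (a∧b) ∨ (a∧¬c) ∨ (b∧¬c). -/
/-- Total weight of a finite multiset `μ` on the set `A`. -/
noncomputable def meas {X : Type*} (μ : X →₀ ℕ) (A : Set X) : ℕ :=
  ∑ x ∈ μ.support, Set.indicator A (⇑μ) x

theorem presburger_one_step_pair_sat_iff (η : Bool → Bool → Bool → Prop) :
    (∃ (X : Type) (τa τb τc : Set X) (μ : X →₀ ℕ),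
        (∀ x : X, ∃ p q r : Bool,
          (p = true ↔ x ∈ τa) ∧ (q = true ↔ x ∈ τb) ∧ (r = true ↔ x ∈ τc) ∧
          η p q r) ∧
        (meas μ τa : ℤ) + (meas μ τb : ℤ) - (meas μ τc : ℤ) > 0) ↔
    (∃ p q r : Bool, η p q r ∧ ((p && q) || (p && !r) || (q && !r)) = true) := by
  constructor
  · rintro ⟨X, τa, τb, τc, μ, h1, h2⟩
    have hsum : meas μ τc < meas μ τa + meas μ τb := by omega
    have hx : ∃ x ∈ μ.support,
        Set.indicator τc (⇑μ) x < Set.indicator τa (⇑μ) x + Set.indicator τb (⇑μ) x := by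
      by_contra h
      push_neg at h
      have hle : (∑ x ∈ μ.support, (Set.indicator τa (⇑μ) x + Set.indicator τb (⇑μ) x)) ≤
          ∑ x ∈ μ.support, Set.indicator τc (⇑μ) x :=
        Finset.sum_le_sum h
      rw [Finset.sum_add_distrib] at hle
      simp only [meas] at hsum
      omega
    obtain ⟨x, hxs, hlt⟩ := hx
    obtain ⟨p, q, r, hp, hq, hr, hη⟩ := h1 x
    refine ⟨p, q, r, hη, ?_⟩
    have hμ : μ x ≠ 0 := Finsupp.mem_support_iff.mp hxs
    cases p <;> cases q <;> cases r <;> simp_all [Set.indicator]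
  · rintro ⟨p, q, r, hη, hb⟩
    refine ⟨PUnit, {_x | p = true}, {_x | q = true}, {_x | r = true},
      Finsupp.single default 1, ?_, ?_⟩
    · intro x
      exact ⟨p, q, r, by simp, by simp, by simp, hη⟩
    · have key : ∀ (b : Bool),
          meas (Finsupp.single (default : PUnit) 1) {_x : PUnit | b = true}
            = if b then 1 else 0 := by
        intro b
        cases b <;> simp [meas, Set.indicator, Finsupp.support_single_ne_zero]
      rw [key, key, key]
      cases p <;> cases q <;> cases r <;> simp_all
end
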